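/- arXiv:1711.00724 — 2 statements merged into one kernel-verified Lean document; each statement's English description precedes it below -/
import Mathlib

section
/- The function F(t) = 1/(t²φ(t)²) + 1/((π−t)²φ(π−t)²) − (cos²t/sin²t)/φ(sin t)² + 2/φ(sin t), defined for t ∈ (0,π), satisfies lim_{t→0⁺} F(t) = 1/π² and lim_{t→π⁻} F(t) = 1/π² (hence F extends continuously to [0,π]). -/
open Real Set Filter Topology

noncomputable section

/-- `φ(t) = log (π e / t)`. -/
def phi (t : ℝ) : ℝ := Real.log (π * Real.exp 1 / t)

/-- The function `F` from the proof of Theorem 1. -/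
def Ffun (t : ℝ) : ℝ :=
  1 / (t ^ 2 * phi t ^ 2) + 1 / ((π - t) ^ 2 * phi (π - t) ^ 2)
    - (Real.cos t ^ 2 / Real.sin t ^ 2) / phi (Real.sin t) ^ 2 + 2 / phi (Real.sin t)

lemma phi_pi : phi π = 1 := by
  unfold phi
  rw [mul_comm, mul_div_assoc, div_self Real.pi_ne_zero, mul_one, Real.log_exp]

lemma phi_tendsto_atTop : Tendsto phi (𝓝[>] (0 : ℝ)) atTop := by
  have h1 : Tendsto (fun t : ℝ => π * Real.exp 1 / t) (𝓝[>] (0 : ℝ)) atTop := by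
    simp only [div_eq_mul_inv]
    exact Tendsto.const_mul_atTop (by positivity) tendsto_inv_nhdsGT_zero
  exact Real.tendsto_log_atTop.comp h1

lemma sin_tendsto_zero_right : Tendsto Real.sin (𝓝[>] (0 : ℝ)) (𝓝[>] (0 : ℝ)) := by
  apply tendsto_nhdsWithin_of_tendsto_nhds_of_eventually_within
  · simpa using (Real.continuous_sin.tendsto 0).mono_left nhdsWithin_le_nhds
  · filter_upwards [Ioo_mem_nhdsGT_of_mem (by norm_num : (0:ℝ) ∈ Ico (0:ℝ) 1)] with t ht
    exact Real.sin_pos_of_pos_of_lt_pi ht.1 (ht.2.trans (by linarith [Real.pi_gt_three]))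

lemma Ffun_symm (t : ℝ) : Ffun (π - t) = Ffun t := by
  simp only [Ffun, Real.sin_pi_sub, Real.cos_pi_sub, sub_sub_cancel]
  ring

set_option maxHeartbeats 1000000 in
lemma Ffun_tendsto_zero_right : Tendsto Ffun (𝓝[>] (0 : ℝ)) (𝓝 (1 / π ^ 2)) := by
  have hπe : (0:ℝ) < π * Real.exp 1 := by positivity
  have hsinT : Tendsto (fun t => phi (Real.sin t)) (𝓝[>] (0 : ℝ)) atTop :=
    phi_tendsto_atTop.comp sin_tendsto_zero_right
  have hIoo : Ioo (0:ℝ) 1 ∈ 𝓝[>] (0:ℝ) :=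
    Ioo_mem_nhdsGT_of_mem (by norm_num : (0:ℝ) ∈ Ico (0:ℝ) 1)
  -- basic facts for t ∈ (0,1)
  have hbasic : ∀ t ∈ Ioo (0:ℝ) 1,
      0 < Real.sin t ∧ Real.sin t < t ∧ t - t^3/4 < Real.sin t ∧
      1 ≤ phi t ∧ phi t ≤ phi (Real.sin t) := by
    intro t ht
    have ht0 := ht.1
    have ht1 := ht.2
    have hs0 : 0 < Real.sin t :=
      Real.sin_pos_of_pos_of_lt_pi ht0 (ht1.trans (by linarith [Real.pi_gt_three]))
    have hst : Real.sin t < t := Real.sin_lt ht0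
    have hcube : t - t^3/4 < Real.sin t := by have := Real.sin_gt_sub_cube ht0; nlinarith [pow_pos ht0 3]
    have ha1 : 1 ≤ phi t := by
      rw [phi, Real.le_log_iff_exp_le (by positivity)]
      rw [le_div_iff₀ ht0]
      nlinarith [Real.pi_gt_three, Real.exp_pos 1]
    have hab : phi t ≤ phi (Real.sin t) := by
      apply Real.log_le_log (by positivity)
      exact div_le_div_of_nonneg_left hπe.le hs0 hst.le
    exact ⟨hs0, hst, hcube, ha1, hab⟩
  -- The four pieces
  -- P: (1/phi t^2 - 1/phi (sin t)^2) / t^2 → 0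
  have hPbound : Tendsto (fun t : ℝ => (2/3) / phi t ^ 3) (𝓝[>] (0:ℝ)) (𝓝 0) := by
    have h1 : Tendsto (fun t : ℝ => phi t ^ 3) (𝓝[>] (0:ℝ)) atTop :=
      (tendsto_pow_atTop (by norm_num : (3:ℕ) ≠ 0)).comp phi_tendsto_atTop
    simpa [div_eq_mul_inv] using h1.inv_tendsto_atTop.const_mul (2/3 : ℝ)
  have hP : Tendsto (fun t : ℝ => (1 / phi t ^ 2 - 1 / phi (Real.sin t) ^ 2) / t ^ 2)
      (𝓝[>] (0:ℝ)) (𝓝 0) := by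
    apply squeeze_zero_norm' _ hPbound
    filter_upwards [hIoo] with t ht
    obtain ⟨hs0, hst, hcube, ha1, hab⟩ := hbasic t ht
    have ht0 := ht.1
    have ht1 := ht.2
    set a := phi t with hadef
    set b := phi (Real.sin t) with hbdef
    have ha0 : 0 < a := lt_of_lt_of_le one_pos ha1
    have hb0 : 0 < b := lt_of_lt_of_le one_pos (ha1.trans hab)
    have hslb : (3/4) * t ≤ Real.sin t := by
      nlinarith [mul_nonneg (mul_nonneg ht0.le (by linarith : (0:ℝ) ≤ 1 - t))
        (by linarith : (0:ℝ) ≤ 1 + t)]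
    -- b - a = log t - log (sin t) ≤ t^2/3
    have hLdiff : b - a = Real.log t - Real.log (Real.sin t) := by
      rw [hadef, hbdef, phi, phi, Real.log_div hπe.ne' hs0.ne',
        Real.log_div hπe.ne' ht0.ne']
      ring
    have hL0 : 0 ≤ b - a := by linarith
    have hLb : b - a ≤ t ^ 2 / 3 := by
      rw [hLdiff]
      have h1 : Real.log t - Real.log (Real.sin t) = Real.log (t / Real.sin t) :=
        (Real.log_div ht0.ne' hs0.ne').symm
      rw [h1]
      have h2 : Real.log (t / Real.sin t) ≤ t / Real.sin t - 1 :=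
        Real.log_le_sub_one_of_pos (by positivity)
      have h3 : t / Real.sin t - 1 = (t - Real.sin t) / Real.sin t := by
        field_simp
      have h4 : (t - Real.sin t) / Real.sin t ≤ (t^3/4) / ((3/4) * t) := by
        apply div_le_div₀ (by positivity) (by nlinarith) (by positivity) hslb
      have h5 : (t^3/4) / ((3/4) * t) = t ^ 2 / 3 := by
        field_simp
      linarith
    have hid : 1 / a ^ 2 - 1 / b ^ 2 = (b - a) * (b + a) / (a ^ 2 * b ^ 2) := by
      field_simp
      ring
    have key : (1 / a ^ 2 - 1 / b ^ 2) / t ^ 2 ≤ (2/3) / a ^ 3 := by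
      rw [hid]
      have h1 : (b - a) * (b + a) / (a ^ 2 * b ^ 2) ≤ (t^2/3) * (2*b) / (a ^ 2 * b ^ 2) := by
        gcongr
        linarith
      have h2 : (t^2/3) * (2*b) / (a ^ 2 * b ^ 2) / t ^ 2 = (2/3) / (a ^ 2 * b) := by
        field_simp
      have h3 : (2/3 : ℝ) / (a ^ 2 * b) ≤ (2/3) / a ^ 3 := by
        gcongr
        nlinarith [mul_le_mul_of_nonneg_left hab (by positivity : (0:ℝ) ≤ a ^ 2)]
      calc (b - a) * (b + a) / (a ^ 2 * b ^ 2) / t ^ 2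
          ≤ (t^2/3) * (2*b) / (a ^ 2 * b ^ 2) / t ^ 2 := by gcongr
        _ = (2/3) / (a ^ 2 * b) := h2
        _ ≤ (2/3) / a ^ 3 := h3
    have hnonneg : 0 ≤ (1 / a ^ 2 - 1 / b ^ 2) / t ^ 2 := by
      apply div_nonneg _ (by positivity)
      have : 1 / b ^ 2 ≤ 1 / a ^ 2 := by gcongr
      linarith
    rw [Real.norm_eq_abs, abs_of_nonneg hnonneg]
    exact key
  -- Q: (1/phi (sin t)^2) * (1/t^2 - cos^2/sin^2) → 0
  have hQbound : Tendsto (fun t : ℝ => 1 / phi (Real.sin t) ^ 2) (𝓝[>] (0:ℝ)) (𝓝 0) := by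
    have h1 : Tendsto (fun t : ℝ => phi (Real.sin t) ^ 2) (𝓝[>] (0:ℝ)) atTop :=
      (tendsto_pow_atTop (by norm_num : (2:ℕ) ≠ 0)).comp hsinT
    simpa [div_eq_mul_inv, Pi.inv_def] using h1.inv_tendsto_atTop
  have hQ : Tendsto
      (fun t : ℝ => (1 / phi (Real.sin t) ^ 2) * (1 / t ^ 2 - Real.cos t ^ 2 / Real.sin t ^ 2))
      (𝓝[>] (0:ℝ)) (𝓝 0) := by
    apply squeeze_zero_norm' _ hQbound
    filter_upwards [hIoo] with t ht
    obtain ⟨hs0, hst, hcube, ha1, hab⟩ := hbasic t ht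
    have ht0 := ht.1
    have ht1 := ht.2
    have hb0 : 0 < phi (Real.sin t) := lt_of_lt_of_le one_pos (ha1.trans hab)
    have hpyth := Real.sin_sq_add_cos_sq t
    have hid : 1 / t ^ 2 - Real.cos t ^ 2 / Real.sin t ^ 2 =
        (Real.sin t ^ 2 - t ^ 2 * Real.cos t ^ 2) / (t ^ 2 * Real.sin t ^ 2) := by
      field_simp
      try ring
    have hd0 : (0:ℝ) < t ^ 2 * Real.sin t ^ 2 := by positivity
    have hcube2 : (t - t^3/4) ^ 2 ≤ Real.sin t ^ 2 := by
      apply pow_le_pow_left₀ (by nlinarith) hcube.le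
    have hupper : Real.sin t ^ 2 - t ^ 2 * Real.cos t ^ 2 ≤ t ^ 2 * Real.sin t ^ 2 := by
      nlinarith [pow_le_pow_left₀ hs0.le hst.le 2]
    have hlower : -(t ^ 2 * Real.sin t ^ 2) ≤ Real.sin t ^ 2 - t ^ 2 * Real.cos t ^ 2 := by
      nlinarith [hcube2, sq_nonneg t, sq_nonneg (t^2), pow_le_pow_left₀ ht0.le ht1.le 2]
    have habs : |1 / t ^ 2 - Real.cos t ^ 2 / Real.sin t ^ 2| ≤ 1 := by
      rw [hid, abs_le]
      constructor
      · rw [le_div_iff₀ hd0]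
        linarith
      · rw [div_le_one hd0]
        linarith
    rw [Real.norm_eq_abs, abs_mul, abs_of_nonneg (by positivity :
      (0:ℝ) ≤ 1 / phi (Real.sin t) ^ 2)]
    calc 1 / phi (Real.sin t) ^ 2 * |1 / t ^ 2 - Real.cos t ^ 2 / Real.sin t ^ 2|
        ≤ 1 / phi (Real.sin t) ^ 2 * 1 := by gcongr
      _ = 1 / phi (Real.sin t) ^ 2 := mul_one _
  -- B: 1/((π-t)^2 * phi(π-t)^2) → 1/π^2
  have hB : Tendsto (fun t : ℝ => 1 / ((π - t) ^ 2 * phi (π - t) ^ 2))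
      (𝓝[>] (0:ℝ)) (𝓝 (1 / π ^ 2)) := by
    have hsub : ContinuousAt (fun t : ℝ => π - t) 0 := by fun_prop
    have hsub0 : (fun t : ℝ => π - t) 0 = π := by simp
    have hphi : ContinuousAt phi π := by
      have h1 : ContinuousAt (fun u : ℝ => π * Real.exp 1 / u) π :=
        continuousAt_const.div continuousAt_id Real.pi_ne_zero
      have h2 : ContinuousAt Real.log (π * Real.exp 1 / π) := by
        apply Real.continuousAt_log
        positivity
      exact h2.comp h1
    have hcomp : ContinuousAt (fun t : ℝ => phi (π - t)) 0 := by
      have hphi' : ContinuousAt phi ((fun t : ℝ => π - t) 0) := by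
        rw [hsub0]; exact hphi
      exact hphi'.comp hsub
    have hc : ContinuousAt (fun t : ℝ => 1 / ((π - t) ^ 2 * phi (π - t) ^ 2)) 0 := by
      apply continuousAt_const.div ((hsub.pow 2).mul (hcomp.pow 2))
      simp only [Pi.mul_apply, Pi.pow_apply, sub_zero, phi_pi, one_pow, mul_one]
      positivity
    have htend : Tendsto (fun t : ℝ => 1 / ((π - t) ^ 2 * phi (π - t) ^ 2)) (𝓝[>] (0:ℝ))
        (𝓝 (1 / ((π - 0) ^ 2 * phi (π - 0) ^ 2))) :=
      hc.tendsto.mono_left nhdsWithin_le_nhds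
    simpa only [sub_zero, phi_pi, one_pow, mul_one] using htend
  -- D: 2/phi(sin t) → 0
  have hD : Tendsto (fun t : ℝ => 2 / phi (Real.sin t)) (𝓝[>] (0:ℝ)) (𝓝 0) := by
    have h1 : Tendsto (fun t : ℝ => (phi (Real.sin t))⁻¹) (𝓝[>] (0:ℝ)) (𝓝 0) :=
      hsinT.inv_tendsto_atTop
    have h2 := h1.const_mul (2:ℝ)
    rw [mul_zero] at h2
    simpa only [div_eq_mul_inv] using h2
  -- combine
  have htotal := ((hP.add hQ).add hB).add hD
  have hEq : Ffun = fun t : ℝ =>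
      ((1 / phi t ^ 2 - 1 / phi (Real.sin t) ^ 2) / t ^ 2 +
        (1 / phi (Real.sin t) ^ 2) * (1 / t ^ 2 - Real.cos t ^ 2 / Real.sin t ^ 2)) +
        1 / ((π - t) ^ 2 * phi (π - t) ^ 2) + 2 / phi (Real.sin t) := by
    funext t
    simp only [Ffun]
    ring
  rw [hEq]
  convert htotal using 2
  ring

/-- `F(t) → 1/π²` as `t → 0⁺` and as `t → π⁻`. -/
theorem Ffun_limits :
    Tendsto Ffun (𝓝[>] (0 : ℝ)) (𝓝 (1 / π ^ 2)) ∧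
    Tendsto Ffun (𝓝[<] π) (𝓝 (1 / π ^ 2)) := by
  have h0 := Ffun_tendsto_zero_right
  refine ⟨h0, ?_⟩
  have hmap : Tendsto (fun t : ℝ => π - t) (𝓝[<] π) (𝓝[>] (0:ℝ)) := by
    apply tendsto_nhdsWithin_of_tendsto_nhds_of_eventually_within
    · have : Tendsto (fun t : ℝ => π - t) (𝓝 π) (𝓝 (π - π)) :=
        (continuous_const.sub continuous_id).tendsto π
      simpa using this.mono_left nhdsWithin_le_nhds
    · filter_upwards [self_mem_nhdsWithin] with t ht
      exact sub_pos.2 (mem_Iio.mp ht)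
  have := h0.comp hmap
  simpa only [Function.comp_def, Ffun_symm] using this
end
end

section
/- The integrals ∫₀^π (sin θ/θ²)·(log(πe/sin θ))^{−1−s} dθ tend to +∞ as s → 0⁺; more precisely, for every real s > 0 one has ∫₀^π (sin θ/θ²)·(log(πe/sin θ))^{−1−s} dθ ≥ (4/(π² s))·(log(πe/sin 1))^{−s}. -/
open Real Set MeasureTheory Filter Topology

noncomputable section

/-- `ψ(t) = log (π e / sin t)`. -/
def psi (t : ℝ) : ℝ := Real.log (π * Real.exp 1 / Real.sin t)

lemma one_le_psi {t : ℝ} (ht : 0 < Real.sin t) : 1 ≤ psi t := by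
  have hpe : (0:ℝ) < π * Real.exp 1 := by positivity
  rw [psi, Real.le_log_iff_exp_le (by positivity), le_div_iff₀ ht]
  nlinarith [Real.sin_le_one t, Real.exp_pos 1, Real.pi_gt_three]

lemma psi_hasDerivAt {θ : ℝ} (h1 : 0 < θ) (h2 : θ < π) :
    HasDerivAt psi (-(Real.cos θ / Real.sin θ)) θ := by
  have hs : 0 < Real.sin θ := Real.sin_pos_of_pos_of_lt_pi h1 h2
  have hpe : (0:ℝ) < π * Real.exp 1 := by positivity
  have hd : HasDerivAt (fun t => Real.log (π * Real.exp 1) - Real.log (Real.sin t))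
      (-(Real.cos θ / Real.sin θ)) θ := by
    simpa using ((Real.hasDerivAt_sin θ).log hs.ne').const_sub (Real.log (π * Real.exp 1))
  apply hd.congr_of_eventuallyEq
  have hev : ∀ᶠ t in 𝓝 θ, 0 < Real.sin t :=
    Real.continuous_sin.continuousAt.eventually_mem (Ioi_mem_nhds hs)
  filter_upwards [hev] with t ht
  rw [psi, Real.log_div hpe.ne' ht.ne']

lemma F_hasDerivAt (s : ℝ) {θ : ℝ} (h1 : 0 < θ) (h2 : θ < π) :
    HasDerivAt (fun t => psi t ^ (-s))
      (s * (Real.cos θ / Real.sin θ * psi θ ^ (-(1 + s)))) θ := by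
  have hs : 0 < Real.sin θ := Real.sin_pos_of_pos_of_lt_pi h1 h2
  have hψ : 1 ≤ psi θ := one_le_psi hs
  have h := (psi_hasDerivAt h1 h2).rpow_const (p := -s) (Or.inl (by linarith))
  convert h using 1
  rw [show -s - 1 = -(1 + s) by ring]
  ring

lemma psi_zero : psi 0 = 0 := by
  simp [psi, Real.sin_zero]

lemma F_contOn {s : ℝ} (hs : 0 < s) :
    ContinuousOn (fun t => psi t ^ (-s)) (Icc (0:ℝ) 1) := by
  have hπ := Real.pi_gt_three
  intro x hx
  rcases eq_or_lt_of_le hx.1 with h0 | h0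
  · -- x = 0
    subst h0
    have hF0 : psi (0:ℝ) ^ (-s) = 0 := by
      rw [psi_zero, Real.zero_rpow (by linarith)]
    have hT : Tendsto (fun t => psi t ^ (-s)) (𝓝[>] (0:ℝ)) (𝓝 0) := by
      have t1 : Tendsto Real.sin (𝓝[>] (0:ℝ)) (𝓝[>] 0) := by
        rw [tendsto_nhdsWithin_iff]
        constructor
        · simpa using (Real.continuous_sin.tendsto 0).mono_left nhdsWithin_le_nhds
        · filter_upwards [Ioo_mem_nhdsGT_of_mem (⟨le_refl 0, Real.pi_pos⟩ : (0:ℝ) ∈ Ico 0 π)]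
            with t ht
          exact Real.sin_pos_of_pos_of_lt_pi ht.1 ht.2
      have t2 : Tendsto (fun x : ℝ => π * Real.exp 1 / x) (𝓝[>] (0:ℝ)) atTop := by
        simp only [div_eq_mul_inv]
        exact tendsto_inv_nhdsGT_zero.const_mul_atTop (by positivity)
      exact (tendsto_rpow_neg_atTop hs).comp (Real.tendsto_log_atTop.comp (t2.comp t1))
    rw [ContinuousWithinAt, hF0]
    apply Tendsto.mono_left _ (nhdsWithin_mono _ (Icc_subset_Ici_self))
    rw [show Ici (0:ℝ) = insert 0 (Ioi 0) by rw [Set.Ioi_insert], nhdsWithin_insert]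
    rw [tendsto_sup]
    refine ⟨?_, hT⟩
    have hp : Tendsto (fun t => psi t ^ (-s)) (pure (0:ℝ)) (𝓝 (psi (0:ℝ) ^ (-s))) :=
      tendsto_pure_nhds _ _
    rwa [hF0] at hp
  · exact ((F_hasDerivAt s h0 (by linarith [hx.2])).continuousAt).continuousWithinAt

lemma key (s : ℝ) (hs : 0 < s) :
    (4 / (π ^ 2 * s)) * psi 1 ^ (-s) ≤
      ∫ θ in Ioo (0 : ℝ) π, (Real.sin θ / θ ^ 2) * psi θ ^ (-(1 + s)) := by
  have hπ := Real.pi_gt_three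
  set f : ℝ → ℝ := fun θ => Real.sin θ / θ ^ 2 * psi θ ^ (-(1 + s)) with hf_def
  set D : ℝ → ℝ := fun θ => s * (Real.cos θ / Real.sin θ * psi θ ^ (-(1 + s))) with hD_def
  have hmem : ∀ x ∈ Ioo (0:ℝ) 1, 0 < x ∧ x < π := fun x hx => ⟨hx.1, by linarith [hx.2]⟩
  have hderiv : ∀ x ∈ Ioo (0:ℝ) 1, HasDerivAt (fun t => psi t ^ (-s)) (D x) x :=
    fun x hx => F_hasDerivAt s hx.1 (by linarith [hx.2])
  have hψpos : ∀ x, 0 < Real.sin x → (0:ℝ) ≤ psi x ^ (-(1 + s)) :=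
    fun x hx => Real.rpow_nonneg (by linarith [one_le_psi hx]) _
  have hDpos : ∀ x ∈ Ioo (0:ℝ) 1, 0 ≤ D x := by
    intro x hx
    have hsx : 0 < Real.sin x := Real.sin_pos_of_pos_of_lt_pi hx.1 (by linarith [hx.2])
    have hcx : 0 ≤ Real.cos x := Real.cos_nonneg_of_mem_Icc ⟨by linarith [hx.1.le], by linarith [hx.2]⟩
    have := hψpos x hsx
    positivity
  have hDint : IntegrableOn D (Ioc (0:ℝ) 1) :=
    intervalIntegral.integrableOn_deriv_of_nonneg (F_contOn hs) hderiv hDpos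
  have hFTC : ∫ θ in Ioc (0:ℝ) 1, D θ = psi 1 ^ (-s) := by
    have h0 : psi (0:ℝ) ^ (-s) = 0 := by rw [psi_zero, Real.zero_rpow (by linarith)]
    have := intervalIntegral.integral_eq_sub_of_hasDerivAt_of_le (zero_le_one) (F_contOn hs)
      hderiv ((intervalIntegrable_iff_integrableOn_Ioc_of_le zero_le_one).mpr hDint)
    rw [intervalIntegral.integral_of_le zero_le_one] at this
    rw [this, h0, sub_zero]
  -- continuity of f on (0, π)
  have hfc : ContinuousOn f (Ioo (0:ℝ) π) := by
    intro x hx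
    have hsx : 0 < Real.sin x := Real.sin_pos_of_pos_of_lt_pi hx.1 hx.2
    have hψ : 1 ≤ psi x := one_le_psi hsx
    have hx1 := hx.1
    apply ContinuousAt.continuousWithinAt
    apply ContinuousAt.mul
    · exact Real.continuous_sin.continuousAt.div (continuousAt_pow x 2) (by positivity)
    · have hψc : ContinuousAt psi x := by
        have hq : ContinuousAt (fun t => π * Real.exp 1 / Real.sin t) x :=
          continuousAt_const.div Real.continuous_sin.continuousAt hsx.ne'
        exact (Real.continuousAt_log (by positivity)).comp hq
      exact (Real.continuousAt_rpow_const _ _ (Or.inl (by linarith))).comp hψc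
  have hsub1 : Ioc (0:ℝ) 1 ⊆ Ioo 0 π := fun x hx => ⟨hx.1, by linarith [hx.2]⟩
  have hsub2 : Ico (1:ℝ) π ⊆ Ioo 0 π := fun x hx => ⟨by linarith [hx.1], hx.2⟩
  -- pointwise bounds on (0,1]
  have hcos1 : (0:ℝ) < Real.cos 1 :=
    Real.cos_pos_of_mem_Ioo ⟨by linarith, by linarith⟩
  have hbound : ∀ x ∈ Ioc (0:ℝ) 1,
      (3 / (4 * s)) * D x ≤ f x ∧ f x ≤ (1 / (s * Real.cos 1)) * D x ∧ 0 ≤ f x := by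
    intro x hx
    have hx1 : 0 < x := hx.1
    have hx2 : x ≤ 1 := hx.2
    have hxπ : x < π := by linarith
    have hsx : 0 < Real.sin x := Real.sin_pos_of_pos_of_lt_pi hx1 hxπ
    have hcx : 0 ≤ Real.cos x := Real.cos_nonneg_of_mem_Icc ⟨by linarith, by linarith⟩
    have hX : (0:ℝ) ≤ psi x ^ (-(1 + s)) := hψpos x hsx
    have hsinle : Real.sin x ≤ x := Real.sin_le hx1.le
    have hcosge : Real.cos 1 ≤ Real.cos x :=
      Real.cos_le_cos_of_nonneg_of_le_pi hx1.le (by linarith) hx2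
    have htan : x * Real.cos x < Real.sin x := by
      have hxhalf : x < π / 2 := by linarith
      have hcxpos : 0 < Real.cos x := Real.cos_pos_of_mem_Ioo ⟨by linarith, hxhalf⟩
      have := Real.lt_tan hx1 hxhalf
      rw [Real.tan_eq_sin_div_cos, lt_div_iff₀ hcxpos] at this
      linarith
    have hsin34 : 3 / 4 * x ≤ Real.sin x := by
      have h := Real.sin_gt_sub_cube hx1
      have hx3 : x ^ 3 ≤ x := by
        nlinarith [mul_nonneg hx1.le (sub_nonneg.mpr hx2),
          mul_nonneg (mul_nonneg hx1.le hx1.le) (sub_nonneg.mpr hx2)]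
      linarith
    refine ⟨?_, ?_, ?_⟩
    · -- (3/(4s)) * D x ≤ f x
      have h1 : 3 / 4 * (Real.cos x / Real.sin x) ≤ Real.sin x / x ^ 2 := by
        rw [div_mul_div_comm, div_le_div_iff₀ (by positivity) (by positivity)]
        nlinarith [mul_le_mul_of_nonneg_left htan.le (by linarith : (0:ℝ) ≤ 3 * x),
          mul_le_mul_of_nonneg_left hsin34 (by positivity : (0:ℝ) ≤ 4 * Real.sin x)]
      calc (3 / (4 * s)) * D x = (3 / 4 * (Real.cos x / Real.sin x)) * psi x ^ (-(1 + s)) := by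
            simp only [hD_def]; field_simp
        _ ≤ (Real.sin x / x ^ 2) * psi x ^ (-(1 + s)) := mul_le_mul_of_nonneg_right h1 hX
        _ = f x := rfl
    · -- f x ≤ (1/(s cos 1)) * D x
      have h1 : Real.sin x / x ^ 2 ≤ (Real.cos x / Real.sin x) / Real.cos 1 := by
        rw [div_div, div_le_div_iff₀ (by positivity) (by positivity)]
        nlinarith [mul_le_mul hsinle hsinle hsx.le hx1.le,
          mul_le_mul_of_nonneg_left hcosge (sq_nonneg x), hcos1.le]
      calc f x ≤ ((Real.cos x / Real.sin x) / Real.cos 1) * psi x ^ (-(1 + s)) :=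
            mul_le_mul_of_nonneg_right h1 hX
        _ = (1 / (s * Real.cos 1)) * D x := by simp only [hD_def]; field_simp
    · positivity
  -- integrability of f on (0,1]
  have hfint1 : IntegrableOn f (Ioc (0:ℝ) 1) := by
    refine Integrable.mono (hDint.const_mul (1 / (s * Real.cos 1)))
      ((hfc.mono hsub1).aestronglyMeasurable measurableSet_Ioc) ?_
    rw [ae_restrict_iff' measurableSet_Ioc]
    filter_upwards with x hx
    obtain ⟨-, h2, h3⟩ := hbound x hx
    rw [Real.norm_eq_abs, Real.norm_eq_abs, abs_of_nonneg h3]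
    exact h2.trans (le_abs_self _)
  -- integrability of f on [1, π)
  have hfint2 : IntegrableOn f (Ico (1:ℝ) π) := by
    refine Integrable.mono (g := fun _ => (1:ℝ))
      (integrableOn_const measure_Ico_lt_top.ne)
      ((hfc.mono hsub2).aestronglyMeasurable measurableSet_Ico) ?_
    rw [ae_restrict_iff' measurableSet_Ico]
    filter_upwards with x hx
    have hx1 : (1:ℝ) ≤ x := hx.1
    have hxπ : x < π := hx.2
    have hsx : 0 < Real.sin x := Real.sin_pos_of_pos_of_lt_pi (by linarith) hxπ
    have hψ : 1 ≤ psi x := one_le_psi hsx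
    have hX1 : psi x ^ (-(1 + s)) ≤ 1 :=
      Real.rpow_le_one_of_one_le_of_nonpos hψ (by linarith)
    have hX0 : (0:ℝ) ≤ psi x ^ (-(1 + s)) := hψpos x hsx
    have hs2 : Real.sin x / x ^ 2 ≤ 1 := by
      rw [div_le_one (by positivity)]
      nlinarith [Real.sin_le_one x]
    rw [Real.norm_eq_abs, abs_of_nonneg (by positivity)]
    calc Real.sin x / x ^ 2 * psi x ^ (-(1 + s)) ≤ 1 * 1 :=
          mul_le_mul hs2 hX1 hX0 zero_le_one
      _ ≤ ‖(1:ℝ)‖ := by simp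
  have hfint : IntegrableOn f (Ioo (0:ℝ) π) := by
    rw [show Ioo (0:ℝ) π = Ioc 0 1 ∪ Ico 1 π from (Ioc_union_Ico_eq_Ioo one_pos (by linarith)).symm]
    exact hfint1.union hfint2
  have hfnonneg : 0 ≤ᵐ[volume.restrict (Ioo (0:ℝ) π)] f := by
    rw [EventuallyLE, ae_restrict_iff' measurableSet_Ioo]
    filter_upwards with x hx
    have hsx : 0 < Real.sin x := Real.sin_pos_of_pos_of_lt_pi hx.1 hx.2
    have hX0 : (0:ℝ) ≤ psi x ^ (-(1 + s)) := hψpos x hsx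
    have hx1 := hx.1
    positivity
  calc (4 / (π ^ 2 * s)) * psi 1 ^ (-s)
      ≤ (3 / (4 * s)) * psi 1 ^ (-s) := by
        apply mul_le_mul_of_nonneg_right _ (Real.rpow_nonneg (by
          linarith [one_le_psi (Real.sin_pos_of_pos_of_lt_pi one_pos (by linarith))]) _)
        rw [div_le_div_iff₀ (by positivity) (by positivity)]
        have h9 : (9:ℝ) ≤ π ^ 2 := by nlinarith
        nlinarith [mul_le_mul_of_nonneg_right h9 hs.le]
    _ = ∫ θ in Ioc (0:ℝ) 1, (3 / (4 * s)) * D θ := by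
        rw [MeasureTheory.integral_const_mul, hFTC]
    _ ≤ ∫ θ in Ioc (0:ℝ) 1, f θ := by
        apply setIntegral_mono_on (hDint.const_mul _) hfint1 measurableSet_Ioc
        exact fun x hx => (hbound x hx).1
    _ ≤ ∫ θ in Ioo (0:ℝ) π, f θ := by
        apply setIntegral_mono_set hfint hfnonneg
        exact HasSubset.Subset.eventuallyLE (fun x hx => ⟨hx.1, by linarith [hx.2]⟩)

/-- For every `s > 0`,
`∫₀^π (sin θ/θ²) ψ(θ)^{−1−s} dθ ≥ (4/(π² s)) (log(π e/sin 1))^{−s}`;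
in particular these integrals tend to `+∞` as `s → 0⁺`. -/
theorem integral_sin_div_sq_psi_lower_bound :
    (∀ s : ℝ, 0 < s →
      (4 / (π ^ 2 * s)) * psi 1 ^ (-s) ≤
        ∫ θ in Ioo (0 : ℝ) π, (Real.sin θ / θ ^ 2) * psi θ ^ (-(1 + s))) ∧
    Tendsto (fun s : ℝ =>
        ∫ θ in Ioo (0 : ℝ) π, (Real.sin θ / θ ^ 2) * psi θ ^ (-(1 + s)))
      (𝓝[>] (0 : ℝ)) atTop := by
  have hπ := Real.pi_gt_three
  refine ⟨key, ?_⟩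
  have hψ1 : 1 ≤ psi 1 := one_le_psi (Real.sin_pos_of_pos_of_lt_pi one_pos (by linarith))
  have hψ1pos : (0:ℝ) < psi 1 ^ (-(1:ℝ)) := Real.rpow_pos_of_pos (by linarith) _
  have hc : (0:ℝ) < 4 / π ^ 2 * psi 1 ^ (-(1:ℝ)) := by positivity
  apply tendsto_atTop_mono' _ _ (tendsto_inv_nhdsGT_zero.const_mul_atTop hc)
  filter_upwards [Ioc_mem_nhdsGT_of_mem (⟨le_refl 0, one_pos⟩ : (0:ℝ) ∈ Ico 0 1)] with s hs
  have hs0 : 0 < s := hs.1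
  have h1 : psi 1 ^ (-(1:ℝ)) ≤ psi 1 ^ (-s) :=
    Real.rpow_le_rpow_of_exponent_le hψ1 (by linarith [hs.2])
  calc 4 / π ^ 2 * psi 1 ^ (-(1:ℝ)) * s⁻¹
      = (4 / (π ^ 2 * s)) * psi 1 ^ (-(1:ℝ)) := by
        field_simp
    _ ≤ (4 / (π ^ 2 * s)) * psi 1 ^ (-s) :=
        mul_le_mul_of_nonneg_left h1 (by positivity)
    _ ≤ _ := key s hs0
end
end
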